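/- Visser's rule is NNIL(par)-preservative in IPC: with B = ⋀_{i=1}^n (E_i → F_i) and C = ⋁_{i=n+1}^{n+m} E_i, we have (B → C) ⊳_{NNIL(par)} ⋁_{i=1}^{n+m} (B ↦ E_i), where (B ↦ E) := E if E is ⊥ or a parameter, and B → E otherwise. That is, for every E ∈ NNIL(par), IPC ⊢ E → (B → C) implies IPC ⊢ E → ⋁_{i=1}^{n+m} (B ↦ E_i). -/

import Mathlib

inductive Fm : Type
  | bot : Fm
  | atom : ℕ → Fm
  | and : Fm → Fm → Fm
  | or : Fm → Fm → Fm
  | imp : Fm → Fm → Fm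
deriving DecidableEq

namespace Fm

def neg (A : Fm) : Fm := A.imp .bot
def top : Fm := Fm.bot.imp .bot
def iff (A B : Fm) : Fm := (A.imp B).and (B.imp A)

def subst (θ : ℕ → Fm) : Fm → Fm
  | bot => bot
  | atom n => θ n
  | and A B => (A.subst θ).and (B.subst θ)
  | or A B => (A.subst θ).or (B.subst θ)
  | imp A B => (A.subst θ).imp (B.subst θ)

def atoms : Fm → Finset ℕ
  | bot => ∅
  | atom n => {n}
  | and A B => A.atoms ∪ B.atoms
  | or A B => A.atoms ∪ B.atoms
  | imp A B => A.atoms ∪ B.atoms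

/-- maximal nesting of implications in the left/overall: `c→`. -/
def cimp : Fm → ℕ
  | bot => 0
  | atom _ => 0
  | and A B => max A.cimp B.cimp
  | or A B => max A.cimp B.cimp
  | imp A B => 1 + max A.cimp B.cimp

end Fm

def bigAndL (l : List Fm) : Fm := l.foldr Fm.and Fm.top
def bigOrL (l : List Fm) : Fm := l.foldr Fm.or Fm.bot

/-- nonempty disjunction -/
def bigOrNE : Fm → List Fm → Fm
  | A, [] => A
  | A, B :: l => A.or (bigOrNE B l)

/-- Hilbert-style intuitionistic propositional calculus. -/
inductive IPC : Fm → Prop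
  | imp_k (A B : Fm) : IPC (A.imp (B.imp A))
  | imp_s (A B C : Fm) : IPC ((A.imp (B.imp C)).imp ((A.imp B).imp (A.imp C)))
  | and_intro (A B : Fm) : IPC (A.imp (B.imp (A.and B)))
  | and_left (A B : Fm) : IPC ((A.and B).imp A)
  | and_right (A B : Fm) : IPC ((A.and B).imp B)
  | or_inl (A B : Fm) : IPC (A.imp (A.or B))
  | or_inr (A B : Fm) : IPC (B.imp (A.or B))
  | or_elim (A B C : Fm) : IPC ((A.imp C).imp ((B.imp C).imp ((A.or B).imp C)))
  | exfalso (A : Fm) : IPC (Fm.bot.imp A)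
  | mp {A B : Fm} : IPC (A.imp B) → IPC A → IPC B

/-- Γ-preservativity in the logic T : `A ⊳_{T,Γ} B`. -/
def Pres (T : Fm → Prop) (Γ : Set Fm) (A B : Fm) : Prop :=
  ∀ E ∈ Γ, T (E.imp A) → T (E.imp B)

/-- substitutions are identity on the parameters. -/
def IdOnPar (par : Finset ℕ) (θ : ℕ → Fm) : Prop :=
  ∀ p ∈ par, θ p = Fm.atom p

/-- implication-free formulas. -/
inductive NI : Fm → Prop
  | bot : NI .bot
  | atom (n : ℕ) : NI (.atom n)
  | and {A B : Fm} : NI A → NI B → NI (A.and B)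
  | or {A B : Fm} : NI A → NI B → NI (A.or B)

/-- No Nested Implications in the Left. -/
inductive NNIL : Fm → Prop
  | bot : NNIL .bot
  | atom (n : ℕ) : NNIL (.atom n)
  | and {A B : Fm} : NNIL A → NNIL B → NNIL (A.and B)
  | or {A B : Fm} : NNIL A → NNIL B → NNIL (A.or B)
  | imp {A B : Fm} : NI A → NNIL B → NNIL (A.imp B)

def IPCPrime (A : Fm) : Prop :=
  ∀ B C, IPC (A.imp (B.or C)) → IPC (A.imp B) ∨ IPC (A.imp C)

/-- T-components: `⋀Γ ∧ ⋀Δ`, Γ atoms, Δ implications with atomic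
antecedents not T-provable from Γ. -/
def IsComponentOver (T : Fm → Prop) (B : Fm) : Prop :=
  ∃ (as : List ℕ) (imps : List (ℕ × Fm)),
    B = (bigAndL (as.map Fm.atom)).and
          (bigAndL (imps.map fun p => (Fm.atom p.1).imp p.2)) ∧
    ∀ p ∈ imps, ¬ T ((bigAndL (as.map Fm.atom)).imp (Fm.atom p.1))

/-- `(B ↦ E)`: E itself if E is ⊥ or a parameter, else B → E. -/
def hook (par : Finset ℕ) (B : Fm) : Fm → Fm
  | .bot => .bot
  | .atom p => if p ∈ par then .atom p else B.imp (.atom p)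
  | E => B.imp E

/-! ## Auxiliary development -/

section Aux

/-- Provability from a set of hypotheses. -/
inductive Thm (Γ : Set Fm) : Fm → Prop
  | ax {A : Fm} : A ∈ Γ → Thm Γ A
  | ipc {A : Fm} : IPC A → Thm Γ A
  | mp {A B : Fm} : Thm Γ (A.imp B) → Thm Γ A → Thm Γ B

theorem ipc_id (A : Fm) : IPC (A.imp A) :=
  (IPC.mp (IPC.mp (IPC.imp_s A (A.imp A) A) (IPC.imp_k A (A.imp A))) (IPC.imp_k A A))

theorem ipc_comp {A B C : Fm} (h1 : IPC (A.imp B)) (h2 : IPC (B.imp C)) :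
    IPC (A.imp C) :=
  IPC.mp (IPC.mp (IPC.imp_s A B C) (IPC.mp (IPC.imp_k (B.imp C) A) h2)) h1

theorem thm_mono {Γ Γ' : Set Fm} {A : Fm} (h : Thm Γ A) (hs : Γ ⊆ Γ') : Thm Γ' A := by
  induction h with
  | ax hA => exact Thm.ax (hs hA)
  | ipc hA => exact Thm.ipc hA
  | mp _ _ ih1 ih2 => exact Thm.mp ih1 ih2

theorem thm_empty {A : Fm} (h : Thm ∅ A) : IPC A := by
  induction h with
  | ax hA => exact absurd hA (Set.notMem_empty _)
  | ipc hA => exact hA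
  | mp _ _ ih1 ih2 => exact IPC.mp ih1 ih2

/-- Deduction theorem. -/
theorem deduction {Γ : Set Fm} {A B : Fm} (h : Thm (insert A Γ) B) :
    Thm Γ (A.imp B) := by
  induction h with
  | @ax X hX =>
    rcases hX with h | h
    · subst h; exact Thm.ipc (ipc_id _)
    · exact Thm.mp (Thm.ipc (IPC.imp_k X A)) (Thm.ax h)
  | @ipc X hX => exact Thm.mp (Thm.ipc (IPC.imp_k X A)) (Thm.ipc hX)
  | @mp X Y _ _ ih1 ih2 =>
    exact Thm.mp (Thm.mp (Thm.ipc (IPC.imp_s A X Y)) ih1) ih2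

theorem thm_compact {Γ : Set Fm} {A : Fm} (h : Thm Γ A) :
    ∃ s : Finset Fm, ↑s ⊆ Γ ∧ Thm ↑s A := by
  induction h with
  | @ax X hX =>
    exact ⟨{X}, by simpa using hX, Thm.ax (by simp)⟩
  | ipc hX => exact ⟨∅, by simp, Thm.ipc hX⟩
  | @mp X Y _ _ ih1 ih2 =>
    obtain ⟨s1, hs1, ht1⟩ := ih1
    obtain ⟨s2, hs2, ht2⟩ := ih2
    refine ⟨s1 ∪ s2, ?_, Thm.mp (thm_mono ht1 ?_) (thm_mono ht2 ?_)⟩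
    · intro x hx
      rcases Finset.mem_union.1 (by exact_mod_cast hx) with h | h
      · exact hs1 h
      · exact hs2 h
    · intro x hx; exact_mod_cast Finset.mem_union_left _ (by exact_mod_cast hx)
    · intro x hx; exact_mod_cast Finset.mem_union_right _ (by exact_mod_cast hx)

/-- Prime theories. -/
structure IsPrime (Δ : Set Fm) : Prop where
  closed : ∀ {A : Fm}, Thm Δ A → A ∈ Δ
  nbot : Fm.bot ∉ Δ
  prime : ∀ {A B : Fm}, A.or B ∈ Δ → A ∈ Δ ∨ B ∈ Δ

theorem finset_subset_chain_mem {c : Set (Set Fm)} (hc : IsChain (· ⊆ ·) c)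
    (hne : c.Nonempty) (s : Finset Fm) (hs : ↑s ⊆ ⋃₀ c) :
    ∃ t ∈ c, ↑s ⊆ t := by
  classical
  induction s using Finset.induction with
  | empty => exact ⟨hne.choose, hne.choose_spec, by simp⟩
  | @insert a s ha ih =>
    have hsub : ↑s ⊆ ⋃₀ c := by
      refine subset_trans ?_ hs
      intro x hx; exact_mod_cast Finset.mem_insert_of_mem (by exact_mod_cast hx)
    obtain ⟨t, htc, hts⟩ := ih hsub
    obtain ⟨t', ht'c, hat'⟩ := hs (by exact_mod_cast Finset.mem_insert_self a s)
    rcases hc.total htc ht'c with h | h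
    · exact ⟨t', ht'c, by
        intro x hx
        rcases Finset.mem_insert.1 (by exact_mod_cast hx) with rfl | hx
        · exact hat'
        · exact h (hts (by exact_mod_cast hx))⟩
    · exact ⟨t, htc, by
        intro x hx
        rcases Finset.mem_insert.1 (by exact_mod_cast hx) with rfl | hx
        · exact h hat'
        · exact hts (by exact_mod_cast hx)⟩

/-- Lindenbaum lemma. -/
theorem lindenbaum {Γ : Set Fm} {D : Fm} (h : ¬ Thm Γ D) :
    ∃ Δ : Set Fm, Γ ⊆ Δ ∧ IsPrime Δ ∧ ¬ Thm Δ D := by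
  classical
  set S : Set (Set Fm) := {Γ' | Γ ⊆ Γ' ∧ ¬ Thm Γ' D} with hS
  have hub : ∀ c ⊆ S, IsChain (· ⊆ ·) c → c.Nonempty →
      ∃ ub ∈ S, ∀ s ∈ c, s ⊆ ub := by
    intro c hcS hchain hcne
    refine ⟨⋃₀ c, ⟨?_, ?_⟩, fun s hs => Set.subset_sUnion_of_mem hs⟩
    · obtain ⟨t, ht⟩ := hcne
      exact subset_trans (hcS ht).1 (Set.subset_sUnion_of_mem ht)
    · intro hthm
      obtain ⟨s, hs, hsthm⟩ := thm_compact hthm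
      obtain ⟨t, htc, hst⟩ := finset_subset_chain_mem hchain hcne s hs
      exact (hcS htc).2 (thm_mono hsthm hst)
  obtain ⟨M, hGM, hMS, hmax⟩ := zorn_subset_nonempty S hub Γ ⟨subset_rfl, h⟩
  · -- M is maximal in S
    have hMnot : ¬ Thm M D := hMS.2
    have key : ∀ {A : Fm}, A ∉ M → Thm M (A.imp D) := by
      intro A hA
      have : insert A M ∉ S := by
        intro hmem
        have := hmax hmem (Set.subset_insert _ _)
        exact hA (this (Set.mem_insert _ _))
      have hthm : Thm (insert A M) D := by
        by_contra hc
        exact this ⟨subset_trans hMS.1 (Set.subset_insert _ _), hc⟩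
      exact deduction hthm
    refine ⟨M, hGM, ⟨?_, ?_, ?_⟩, hMnot⟩
    · intro A hA
      by_contra hAM
      exact hMnot (Thm.mp (key hAM) hA)
    · intro hb
      exact hMnot (Thm.mp (Thm.ipc (IPC.exfalso D)) (Thm.ax hb))
    · intro A B hor
      by_contra hc
      push_neg at hc
      have h1 := key hc.1
      have h2 := key hc.2
      have h3 : Thm M ((A.or B).imp D) :=
        Thm.mp (Thm.mp (Thm.ipc (IPC.or_elim A B D)) h1) h2
      exact hMnot (Thm.mp h3 (Thm.ax hor))

end Aux
section Kripke

structure Kripke where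
  W : Type
  le : W → W → Prop
  refl : ∀ w, le w w
  trans : ∀ {a b c : W}, le a b → le b c → le a c
  val : W → ℕ → Prop
  mono : ∀ {a b : W} {p : ℕ}, le a b → val a p → val b p

def Kripke.force (M : Kripke) : M.W → Fm → Prop
  | _, .bot => False
  | w, .atom p => M.val w p
  | w, .and A B => M.force w A ∧ M.force w B
  | w, .or A B => M.force w A ∨ M.force w B
  | w, .imp A B => ∀ v, M.le w v → M.force v A → M.force v B

theorem Kripke.force_mono (M : Kripke) {a b : M.W} (hab : M.le a b) :
    ∀ {A : Fm}, M.force a A → M.force b A := by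
  intro A
  induction A with
  | bot => exact id
  | atom p => exact M.mono hab
  | and A B ihA ihB => exact fun h => ⟨ihA h.1, ihB h.2⟩
  | or A B ihA ihB => exact fun h => h.elim (fun h => Or.inl (ihA h)) (fun h => Or.inr (ihB h))
  | imp A B ihA ihB => exact fun h v hv hA => h v (M.trans hab hv) hA

theorem soundness {A : Fm} (h : IPC A) (M : Kripke) (w : M.W) : M.force w A := by
  induction h with
  | imp_k A B => exact fun v hv hA u hu _ => M.force_mono hu hA
  | imp_s A B C =>
    intro v1 h1 hf1 v2 h2 hf2 v3 h3 hf3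
    exact (hf1 v3 (M.trans h2 h3) hf3) v3 (M.refl v3) (hf2 v3 h3 hf3)
  | and_intro A B => exact fun v hv hA u hu hB => ⟨M.force_mono hu hA, hB⟩
  | and_left A B => exact fun v hv h => h.1
  | and_right A B => exact fun v hv h => h.2
  | or_inl A B => exact fun v hv h => Or.inl h
  | or_inr A B => exact fun v hv h => Or.inr h
  | or_elim A B C =>
    intro v1 h1 hf1 v2 h2 hf2 v3 h3 hor
    rcases hor with h | h
    · exact hf1 v3 (M.trans h2 h3) h
    · exact hf2 v3 h3 h
  | exfalso A => exact fun v hv h => h.elim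
  | mp h1 h2 ih1 ih2 => exact ih1 w (M.refl w) ih2

theorem force_bigAndL (M : Kripke) (w : M.W) (l : List Fm) :
    M.force w (bigAndL l) ↔ ∀ X ∈ l, M.force w X := by
  induction l with
  | nil =>
    simp only [bigAndL, List.foldr_nil]
    constructor
    · intro _ X hX; exact absurd hX List.not_mem_nil
    · intro _; exact fun v hv h => h
  | cons a l ih =>
    simp only [bigAndL, List.foldr_cons] at *
    constructor
    · rintro ⟨h1, h2⟩ X hX
      rcases List.mem_cons.1 hX with rfl | hX
      · exact h1
      · exact (ih.1 h2) X hX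
    · intro h
      exact ⟨h a (List.mem_cons_self), ih.2 (fun X hX => h X (List.mem_cons_of_mem a hX))⟩

theorem force_bigOrL (M : Kripke) (w : M.W) (l : List Fm) :
    M.force w (bigOrL l) → ∃ X ∈ l, M.force w X := by
  induction l with
  | nil => intro h; exact absurd h id
  | cons a l ih =>
    intro h
    rcases h with h | h
    · exact ⟨a, List.mem_cons_self, h⟩
    · obtain ⟨X, hX, h⟩ := ih h
      exact ⟨X, List.mem_cons_of_mem a hX, h⟩

theorem ipc_bigAndL_elim {l : List Fm} {X : Fm} (hX : X ∈ l) :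
    IPC ((bigAndL l).imp X) := by
  induction l with
  | nil => exact absurd hX List.not_mem_nil
  | cons a l ih =>
    rcases List.mem_cons.1 hX with rfl | hX
    · exact IPC.and_left _ _
    · exact ipc_comp (IPC.and_right a (bigAndL l)) (ih hX)

theorem ipc_bigOrL_intro {l : List Fm} {X : Fm} (hX : X ∈ l) :
    IPC (X.imp (bigOrL l)) := by
  induction l with
  | nil => exact absurd hX List.not_mem_nil
  | cons a l ih =>
    rcases List.mem_cons.1 hX with rfl | hX
    · exact IPC.or_inl _ _
    · exact ipc_comp (ih hX) (IPC.or_inr a (bigOrL l))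

end Kripke

theorem Kripke.force_congr (M : Kripke) (w : M.W) {A A' : Fm} (h : A = A')
    (hf : M.force w A') : M.force w A := by rw [h]; exact hf
section MainModel

variable (par : Finset ℕ) (B : Fm) (Δ : Set Fm)

/-- Worlds: a new root `none`, plus prime theories extending `Δ` and containing `B`. -/
def Wd := Option {Θ : Set Fm // IsPrime Θ ∧ Δ ⊆ Θ ∧ B ∈ Θ}

def wle : Wd B Δ → Wd B Δ → Prop
  | none, _ => True
  | some _, none => False
  | some a, some b => a.1 ⊆ b.1

def wval : Wd B Δ → ℕ → Prop
  | none, p => p ∈ par ∧ Fm.atom p ∈ Δ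
  | some a, p => Fm.atom p ∈ a.1

def KMod : Kripke where
  W := Wd B Δ
  le := wle B Δ
  refl := by
    rintro (_ | a)
    · exact trivial
    · exact fun x hx => hx
  trans := by
    rintro (_ | a) (_ | b) (_ | c) h1 h2
    · exact trivial
    · exact trivial
    · exact trivial
    · exact trivial
    · exact absurd h1 id
    · exact absurd h1 id
    · exact absurd h2 id
    · exact fun x hx => h2 (h1 hx)
  val := wval par B Δ
  mono := by
    rintro (_ | a) (_ | b) p h1 h2
    · exact h2
    · exact b.2.2.1 h2.2
    · exact absurd h1 id
    · exact h1 h2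

variable {par B Δ}

/-- Truth lemma for the non-root worlds. -/
theorem truth_some : ∀ (A : Fm) (Θ : {Θ : Set Fm // IsPrime Θ ∧ Δ ⊆ Θ ∧ B ∈ Θ}),
    (KMod par B Δ).force (some Θ) A ↔ A ∈ Θ.1 := by
  intro A
  induction A with
  | bot =>
    intro Θ
    exact ⟨fun h => h.elim, fun h => Θ.2.1.nbot h⟩
  | atom p => intro Θ; exact Iff.rfl
  | and A1 A2 ih1 ih2 =>
    intro Θ
    constructor
    · rintro ⟨h1, h2⟩
      exact Θ.2.1.closed (Thm.mp (Thm.mp (Thm.ipc (IPC.and_intro A1 A2))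
        (Thm.ax ((ih1 Θ).1 h1))) (Thm.ax ((ih2 Θ).1 h2)))
    · intro h
      refine ⟨(ih1 Θ).2 ?_, (ih2 Θ).2 ?_⟩
      · exact Θ.2.1.closed (Thm.mp (Thm.ipc (IPC.and_left A1 A2)) (Thm.ax h))
      · exact Θ.2.1.closed (Thm.mp (Thm.ipc (IPC.and_right A1 A2)) (Thm.ax h))
  | or A1 A2 ih1 ih2 =>
    intro Θ
    constructor
    · rintro (h | h)
      · exact Θ.2.1.closed (Thm.mp (Thm.ipc (IPC.or_inl A1 A2)) (Thm.ax ((ih1 Θ).1 h)))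
      · exact Θ.2.1.closed (Thm.mp (Thm.ipc (IPC.or_inr A1 A2)) (Thm.ax ((ih2 Θ).1 h)))
    · intro h
      rcases Θ.2.1.prime h with h | h
      · exact Or.inl ((ih1 Θ).2 h)
      · exact Or.inr ((ih2 Θ).2 h)
  | imp A1 A2 ih1 ih2 =>
    intro Θ
    constructor
    · intro hf
      by_contra himp
      have hnthm : ¬ Thm (insert A1 Θ.1) A2 := by
        intro hthm
        exact himp (Θ.2.1.closed (deduction hthm))
      obtain ⟨Θ', hsub, hprime, hnthm'⟩ := lindenbaum hnthm
      have hΘsub : Θ.1 ⊆ Θ' := subset_trans (Set.subset_insert _ _) hsub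
      have hΘ' : IsPrime Θ' ∧ Δ ⊆ Θ' ∧ B ∈ Θ' :=
        ⟨hprime, subset_trans Θ.2.2.1 hΘsub, hΘsub Θ.2.2.2⟩
      have hA1 : (KMod par B Δ).force (some ⟨Θ', hΘ'⟩) A1 :=
        (ih1 _).2 (hsub (Set.mem_insert _ _))
      have hA2 := hf (some ⟨Θ', hΘ'⟩) hΘsub hA1
      exact hnthm' (Thm.ax ((ih2 _).1 hA2))
    · intro h v hv hA1
      match v with
      | none => exact absurd hv id
      | some Θ' =>
        refine (ih2 Θ').2 (Θ'.2.1.closed (Thm.mp (Thm.ax (hv h)) (Thm.ax ((ih1 Θ').1 hA1))))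

/-- implication-free formulas over `par` behave at the root like in `Δ`. -/
theorem ni_root (hΔ : IsPrime Δ) {A : Fm} (hA : NI A) (hpar : A.atoms ⊆ par) :
    (KMod par B Δ).force none A ↔ A ∈ Δ := by
  induction hA with
  | bot => exact ⟨fun h => h.elim, fun h => hΔ.nbot h⟩
  | atom n =>
    have : n ∈ par := hpar (by simp [Fm.atoms])
    constructor
    · intro h; exact h.2
    · intro h; exact ⟨this, h⟩
  | @and A1 A2 h1 h2 ih1 ih2 =>
    have hp1 : A1.atoms ⊆ par := subset_trans (by simp [Fm.atoms]) hpar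
    have hp2 : A2.atoms ⊆ par := subset_trans (by simp [Fm.atoms]) hpar
    constructor
    · rintro ⟨f1, f2⟩
      exact hΔ.closed (Thm.mp (Thm.mp (Thm.ipc (IPC.and_intro A1 A2))
        (Thm.ax ((ih1 hp1).1 f1))) (Thm.ax ((ih2 hp2).1 f2)))
    · intro h
      refine ⟨(ih1 hp1).2 ?_, (ih2 hp2).2 ?_⟩
      · exact hΔ.closed (Thm.mp (Thm.ipc (IPC.and_left A1 A2)) (Thm.ax h))
      · exact hΔ.closed (Thm.mp (Thm.ipc (IPC.and_right A1 A2)) (Thm.ax h))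
  | @or A1 A2 h1 h2 ih1 ih2 =>
    have hp1 : A1.atoms ⊆ par := subset_trans (by simp [Fm.atoms]) hpar
    have hp2 : A2.atoms ⊆ par := subset_trans (by simp [Fm.atoms]) hpar
    constructor
    · rintro (f | f)
      · exact hΔ.closed (Thm.mp (Thm.ipc (IPC.or_inl A1 A2)) (Thm.ax ((ih1 hp1).1 f)))
      · exact hΔ.closed (Thm.mp (Thm.ipc (IPC.or_inr A1 A2)) (Thm.ax ((ih2 hp2).1 f)))
    · intro h
      rcases hΔ.prime h with h | h
      · exact Or.inl ((ih1 hp1).2 h)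
      · exact Or.inr ((ih2 hp2).2 h)

/-- NNIL formulas over `par` in `Δ` are forced at the root. -/
theorem nnil_root (hΔ : IsPrime Δ) {A : Fm} (hA : NNIL A) (hpar : A.atoms ⊆ par) (hmem : A ∈ Δ) :
    (KMod par B Δ).force none A := by
  induction hA with
  | bot => exact hΔ.nbot hmem
  | atom n => exact ⟨hpar (by simp [Fm.atoms]), hmem⟩
  | @and A1 A2 h1 h2 ih1 ih2 =>
    have hp1 : A1.atoms ⊆ par := subset_trans (by simp [Fm.atoms]) hpar
    have hp2 : A2.atoms ⊆ par := subset_trans (by simp [Fm.atoms]) hpar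
    exact ⟨ih1 hp1 (hΔ.closed (Thm.mp (Thm.ipc (IPC.and_left A1 A2)) (Thm.ax hmem))),
      ih2 hp2 (hΔ.closed (Thm.mp (Thm.ipc (IPC.and_right A1 A2)) (Thm.ax hmem)))⟩
  | @or A1 A2 h1 h2 ih1 ih2 =>
    have hp1 : A1.atoms ⊆ par := subset_trans (by simp [Fm.atoms]) hpar
    have hp2 : A2.atoms ⊆ par := subset_trans (by simp [Fm.atoms]) hpar
    rcases hΔ.prime hmem with h | h
    · exact Or.inl (ih1 hp1 h)
    · exact Or.inr (ih2 hp2 h)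
  | @imp A1 A2 h1 h2 ih2 =>
    have hp1 : A1.atoms ⊆ par := subset_trans (by simp [Fm.atoms]) hpar
    have hp2 : A2.atoms ⊆ par := subset_trans (by simp [Fm.atoms]) hpar
    intro v hv hA1
    match v with
    | none =>
      have hA1Δ : A1 ∈ Δ := (ni_root hΔ h1 hp1).1 hA1
      exact ih2 hp2 (hΔ.closed (Thm.mp (Thm.ax hmem) (Thm.ax hA1Δ)))
    | some Θ =>
      have himpΘ : A1.imp A2 ∈ Θ.1 := Θ.2.2.1 hmem
      exact (truth_some (A1.imp A2) Θ).2 himpΘ (some Θ) (subset_rfl) hA1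

theorem root_not_force_of_imp_not_mem (hΔ : IsPrime Δ) {G : Fm} (hG : B.imp G ∉ Δ) :
    ¬ (KMod par B Δ).force none G := by
  intro hf
  have hnthm : ¬ Thm (insert B Δ) G := by
    intro hthm
    exact hG (hΔ.closed (deduction hthm))
  obtain ⟨Θ', hsub, hprime, hnthm'⟩ := lindenbaum hnthm
  have hΘ' : IsPrime Θ' ∧ Δ ⊆ Θ' ∧ B ∈ Θ' :=
    ⟨hprime, subset_trans (Set.subset_insert _ _) hsub, hsub (Set.mem_insert _ _)⟩
  have hfΘ : (KMod par B Δ).force (some ⟨Θ', hΘ'⟩) G :=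
    (KMod par B Δ).force_mono (a := none) (b := some ⟨Θ', hΘ'⟩) trivial hf
  exact hnthm' (Thm.ax ((truth_some G ⟨Θ', hΘ'⟩).1 hfΘ))

theorem hook_not_force (hΔ : IsPrime Δ) {G : Fm} (hG : hook par B G ∉ Δ) :
    ¬ (KMod par B Δ).force none G := by
  match G with
  | .bot => exact id
  | .atom p =>
    by_cases hp : p ∈ par
    · simp only [hook, if_pos hp] at hG
      intro hf
      exact hG hf.2
    · intro hf
      exact hp hf.1
  | .and G1 G2 => exact root_not_force_of_imp_not_mem hΔ (by simpa [hook] using hG)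
  | .or G1 G2 => exact root_not_force_of_imp_not_mem hΔ (by simpa [hook] using hG)
  | .imp G1 G2 => exact root_not_force_of_imp_not_mem hΔ (by simpa [hook] using hG)

end MainModel
theorem stmt_18 (par : Finset ℕ) (imps : List (Fm × Fm)) (disjs : List Fm)
    (B C : Fm) (hB : B = bigAndL (imps.map fun p => p.1.imp p.2))
    (hC : C = bigOrL disjs) (E : Fm) (hE : NNIL E) (hEpar : E.atoms ⊆ par)
    (h : IPC (E.imp (B.imp C))) :
    IPC (E.imp (bigOrL
      ((imps.map fun p => hook par B p.1) ++ disjs.map (hook par B)))) := by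
  by_contra hcon
  set D := bigOrL ((imps.map fun p => hook par B p.1) ++ disjs.map (hook par B)) with hD
  have hnthm : ¬ Thm {E} D := by
    intro ht
    apply hcon
    have h1 : Thm (insert E ∅) D := thm_mono ht (by
      intro x hx
      rcases hx with rfl
      exact Set.mem_insert _ _)
    exact thm_empty (deduction h1)
  obtain ⟨Δ, hEΔ, hΔ, hnD⟩ := lindenbaum hnthm
  have hEmem : E ∈ Δ := hEΔ rfl
  have hhook : ∀ X ∈ (imps.map fun p => hook par B p.1) ++ disjs.map (hook par B),
      X ∉ Δ := by
    intro X hX hXΔ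
    exact hnD (Thm.mp (Thm.ipc (ipc_bigOrL_intro hX)) (Thm.ax hXΔ))
  have hforceE : (KMod par B Δ).force none E := nnil_root hΔ hE hEpar hEmem
  have hforceBC : (KMod par B Δ).force none (B.imp C) :=
    soundness h (KMod par B Δ) none none trivial hforceE
  have hforceB : (KMod par B Δ).force none B := by
    refine (KMod par B Δ).force_congr none hB ?_
    refine (force_bigAndL _ _ _).2 ?_
    intro X hX
    obtain ⟨p, hp, rfl⟩ := List.mem_map.1 hX
    intro v hv hA1
    match v with
    | none =>
      exfalso
      have hmem : hook par B p.1 ∉ Δ :=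
        hhook _ (List.mem_append_left _ (List.mem_map_of_mem hp))
      exact hook_not_force hΔ hmem hA1
    | some Θ =>
      have hBΘ : B ∈ Θ.1 := Θ.2.2.2
      have himp : (p.1.imp p.2) ∈ Θ.1 := by
        refine Θ.2.1.closed (Thm.mp (Thm.ipc ?_) (Thm.ax hBΘ))
        rw [hB]
        exact ipc_bigAndL_elim (List.mem_map_of_mem hp)
      exact (truth_some _ Θ).2 himp (some Θ) subset_rfl hA1
  have hforceC : (KMod par B Δ).force none C := hforceBC none trivial hforceB
  rw [hC] at hforceC
  obtain ⟨G, hG, hfG⟩ := force_bigOrL _ _ _ hforceC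
  exact hook_not_force hΔ
    (hhook _ (List.mem_append_right _ (List.mem_map_of_mem hG))) hfG
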